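/- For a smooth nowhere-vanishing ψ on ℝⁿ, the quantum potential equals half the conditional variance of momentum given position: Q_ψ = (1/2)(Re(−Δψ/ψ) − |Re((∇ψ)/(iψ))|²), i.e. Q_ψ = (1/2)(E_ψ(P²|X) − E_ψ(P|X)²) pointwise. -/

import Mathlib

open Complex

/-- for a smooth nowhere-vanishing `ψ = R e^{iS}` on `ℝⁿ`, the
quantum potential equals half the conditional variance of momentum given
position: `Q_ψ = (1/2)(E_ψ(P²|X) − E_ψ(P|X)²)`, i.e.
`−ΔR/(2R) = (1/2)( Re(−Δψ/ψ) − Σ_j (Im(∂_jψ/ψ))² )` pointwise. -/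
theorem stmt_7 {n : ℕ} (R S : (Fin n → ℝ) → ℝ) (ψ : (Fin n → ℝ) → ℂ)
    (hR : ContDiff ℝ 2 R) (hS : ContDiff ℝ 2 S) (hRpos : ∀ x, 0 < R x)
    (hψ : ∀ x, ψ x = (R x : ℂ) * Complex.exp (Complex.I * (S x : ℂ)))
    (x : Fin n → ℝ) :
    -(∑ j : Fin n,
          fderiv ℝ (fun y => fderiv ℝ R y (Pi.single j 1)) x (Pi.single j 1))
        / (2 * R x)
      = (1 / 2) *
        (((-(∑ j : Fin n,
              fderiv ℝ (fun y => fderiv ℝ ψ y (Pi.single j 1)) x (Pi.single j 1)))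
            / ψ x).re
          - ∑ j : Fin n, ((fderiv ℝ ψ x (Pi.single j 1) / ψ x).im) ^ 2) := by
  have hψ' : ψ = fun y => (R y : ℂ) * Complex.exp (Complex.I * (S y : ℂ)) := funext hψ
  subst hψ'
  beta_reduce
  have hRd : Differentiable ℝ R := hR.differentiable two_ne_zero
  have hSd : Differentiable ℝ S := hS.differentiable two_ne_zero
  have hDψ : ∀ y, HasFDerivAt (fun y => (R y : ℂ) * Complex.exp (I * (S y : ℂ)))
      ((R y : ℂ) • (Complex.exp (I * (S y : ℂ)) • (I • (Complex.ofRealCLM.comp (fderiv ℝ S y))))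
        + Complex.exp (I * (S y : ℂ)) • (Complex.ofRealCLM.comp (fderiv ℝ R y))) y := by
    intro y
    have h1 : HasFDerivAt (fun y => (R y : ℂ)) (Complex.ofRealCLM.comp (fderiv ℝ R y)) y :=
      Complex.ofRealCLM.hasFDerivAt.comp y (hRd y).hasFDerivAt
    have h2 : HasFDerivAt (fun y => I * (S y : ℂ)) (I • (Complex.ofRealCLM.comp (fderiv ℝ S y))) y := by
      simpa using (Complex.ofRealCLM.hasFDerivAt.comp y (hSd y).hasFDerivAt).const_mul I
    exact h1.mul h2.cexp
  have hfd : ∀ y v, fderiv ℝ (fun y => (R y : ℂ) * Complex.exp (I * (S y : ℂ))) y v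
      = ((fderiv ℝ R y v : ℂ) + I * (R y : ℂ) * (fderiv ℝ S y v : ℂ)) * Complex.exp (I * (S y : ℂ)) := by
    intro y v
    rw [(hDψ y).fderiv]
    simp
    ring
  have hRj : ∀ j : Fin n, Differentiable ℝ (fun y => fderiv ℝ R y (Pi.single j 1)) := by
    intro j
    exact ((hR.fderiv_right (m := 1) le_rfl).differentiable one_ne_zero).clm_apply
      (differentiable_const _)
  have hSj : ∀ j : Fin n, Differentiable ℝ (fun y => fderiv ℝ S y (Pi.single j 1)) := by
    intro j
    exact ((hS.fderiv_right (m := 1) le_rfl).differentiable one_ne_zero).clm_apply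
      (differentiable_const _)
  set a : Fin n → ℝ := fun j => fderiv ℝ R x (Pi.single j 1) with ha
  set b : Fin n → ℝ := fun j => fderiv ℝ S x (Pi.single j 1) with hb
  set A : Fin n → ℝ := fun j => fderiv ℝ (fun y => fderiv ℝ R y (Pi.single j 1)) x (Pi.single j 1) with hA
  set B : Fin n → ℝ := fun j => fderiv ℝ (fun y => fderiv ℝ S y (Pi.single j 1)) x (Pi.single j 1) with hB
  have hexp_ne : Complex.exp (I * (S x : ℂ)) ≠ 0 := Complex.exp_ne_zero _
  have hRne : (R x : ℂ) ≠ 0 := by exact_mod_cast (hRpos x).ne'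
  have hRne' : R x ≠ 0 := (hRpos x).ne'
  -- second derivative computation
  have hsnd : ∀ j : Fin n, fderiv ℝ (fun y => fderiv ℝ (fun y => (R y : ℂ) * Complex.exp (I * (S y : ℂ))) y (Pi.single j 1)) x (Pi.single j 1)
      = ((A j : ℂ) - (R x : ℂ) * (b j : ℂ)^2
          + I * (2 * (a j : ℂ) * (b j : ℂ) + (R x : ℂ) * (B j : ℂ))) * Complex.exp (I * (S x : ℂ)) := by
    intro j
    have heq : (fun y => fderiv ℝ (fun y => (R y : ℂ) * Complex.exp (I * (S y : ℂ))) y (Pi.single j 1))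
        = fun y => (((fderiv ℝ R y (Pi.single j 1) : ℝ) : ℂ) + I * (R y : ℂ) * ((fderiv ℝ S y (Pi.single j 1) : ℝ) : ℂ))
            * Complex.exp (I * (S y : ℂ)) := by
      funext y; exact hfd y (Pi.single j 1)
    rw [heq]
    have h1 : HasFDerivAt (fun y => ((fderiv ℝ R y (Pi.single j 1) : ℝ) : ℂ))
        (Complex.ofRealCLM.comp (fderiv ℝ (fun y => fderiv ℝ R y (Pi.single j 1)) x)) x :=
      Complex.ofRealCLM.hasFDerivAt.comp x (hRj j x).hasFDerivAt
    have h2 : HasFDerivAt (fun y => ((fderiv ℝ S y (Pi.single j 1) : ℝ) : ℂ))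
        (Complex.ofRealCLM.comp (fderiv ℝ (fun y => fderiv ℝ S y (Pi.single j 1)) x)) x :=
      Complex.ofRealCLM.hasFDerivAt.comp x (hSj j x).hasFDerivAt
    have h3 : HasFDerivAt (fun y => (R y : ℂ)) (Complex.ofRealCLM.comp (fderiv ℝ R x)) x :=
      Complex.ofRealCLM.hasFDerivAt.comp x (hRd x).hasFDerivAt
    have h4 : HasFDerivAt (fun y => I * (R y : ℂ) * ((fderiv ℝ S y (Pi.single j 1) : ℝ) : ℂ)) _ x :=
      ((h3.const_mul I).mul h2)
    have h5 : HasFDerivAt (fun y => ((fderiv ℝ R y (Pi.single j 1) : ℝ) : ℂ) + I * (R y : ℂ) * ((fderiv ℝ S y (Pi.single j 1) : ℝ) : ℂ)) _ x :=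
      h1.add h4
    have h6 : HasFDerivAt (fun y => I * (S y : ℂ)) (I • (Complex.ofRealCLM.comp (fderiv ℝ S x))) x := by
      simpa using (Complex.ofRealCLM.hasFDerivAt.comp x (hSd x).hasFDerivAt).const_mul I
    have h7 : HasFDerivAt (fun y => (((fderiv ℝ R y (Pi.single j 1) : ℝ) : ℂ) + I * (R y : ℂ) * ((fderiv ℝ S y (Pi.single j 1) : ℝ) : ℂ)) * Complex.exp (I * (S y : ℂ))) _ x := h5.mul h6.cexp
    rw [h7.fderiv]
    simp [ha, hb, hA, hB]
    ring_nf
    rw [Complex.I_sq]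
    ring
  -- imaginary part of first derivative over psi
  have him : ∀ j : Fin n, ((fderiv ℝ (fun y => (R y : ℂ) * Complex.exp (I * (S y : ℂ))) x (Pi.single j 1))
      / ((R x : ℂ) * Complex.exp (I * (S x : ℂ)))).im = fderiv ℝ S x (Pi.single j 1) := by
    intro j
    rw [hfd x (Pi.single j 1)]
    rw [mul_comm ((R x : ℂ)) (Complex.exp _), ← div_div, mul_div_assoc,
      div_self hexp_ne, mul_one]
    have h9 : (((fderiv ℝ R x (Pi.single j 1) : ℝ) : ℂ) + I * (R x : ℂ) * ((fderiv ℝ S x (Pi.single j 1) : ℝ) : ℂ)) / (R x : ℂ)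
        = ((fderiv ℝ R x (Pi.single j 1) / R x : ℝ) : ℂ) + ((fderiv ℝ S x (Pi.single j 1) : ℝ) : ℂ) * I := by
      field_simp
      push_cast
      rw [mul_add, mul_div_assoc', mul_comm (R x : ℂ), mul_div_assoc, div_self hRne, mul_one]
      ring
    rw [h9]
    simp
  -- real part of laplacian over psi
  have hre : ((-(∑ j : Fin n,
        fderiv ℝ (fun y => fderiv ℝ (fun y => (R y : ℂ) * Complex.exp (I * (S y : ℂ))) y (Pi.single j 1)) x (Pi.single j 1)))
      / ((R x : ℂ) * Complex.exp (I * (S x : ℂ)))).re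
      = -(∑ j : Fin n, fderiv ℝ (fun y => fderiv ℝ R y (Pi.single j 1)) x (Pi.single j 1)) / R x
        + ∑ j : Fin n, (fderiv ℝ S x (Pi.single j 1))^2 := by
    have hsum : (∑ j : Fin n,
        fderiv ℝ (fun y => fderiv ℝ (fun y => (R y : ℂ) * Complex.exp (I * (S y : ℂ))) y (Pi.single j 1)) x (Pi.single j 1))
        = ((∑ j : Fin n, ((A j : ℂ) - (R x : ℂ) * (b j : ℂ)^2
            + I * (2 * (a j : ℂ) * (b j : ℂ) + (R x : ℂ) * (B j : ℂ))))) * Complex.exp (I * (S x : ℂ)) := by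
      rw [Finset.sum_congr rfl (fun j _ => hsnd j), ← Finset.sum_mul]
    have hsplit : (∑ j : Fin n, ((A j : ℂ) - (R x : ℂ) * (b j : ℂ)^2
            + I * (2 * (a j : ℂ) * (b j : ℂ) + (R x : ℂ) * (B j : ℂ))))
        = (((∑ j : Fin n, A j : ℝ)) : ℂ) - ((R x : ℝ) : ℂ) * (((∑ j : Fin n, (b j)^2 : ℝ)) : ℂ)
          + I * (((∑ j : Fin n, (2 * a j * b j + R x * B j) : ℝ)) : ℂ) := by
      simp only [Finset.sum_add_distrib, Finset.sum_sub_distrib, ← Finset.mul_sum]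
      push_cast
      ring
    rw [hsum, hsplit]
    have h2 : (-((((∑ j : Fin n, A j : ℝ)) : ℂ) - ((R x : ℝ) : ℂ) * (((∑ j : Fin n, (b j)^2 : ℝ)) : ℂ)
          + I * (((∑ j : Fin n, (2 * a j * b j + R x * B j) : ℝ)) : ℂ)) * Complex.exp (I * (S x : ℂ)))
          / ((R x : ℂ) * Complex.exp (I * (S x : ℂ)))
        = (((-(∑ j : Fin n, A j) / R x + ∑ j : Fin n, (b j)^2 : ℝ)) : ℂ)
          + (((-(∑ j : Fin n, (2 * a j * b j + R x * B j)) / R x : ℝ)) : ℂ) * I := by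
      push_cast
      field_simp
      ring
    rw [neg_mul_eq_neg_mul, h2]
    simp only [Complex.add_re, Complex.ofReal_re, Complex.mul_re, Complex.I_re, Complex.I_im,
      Complex.ofReal_im, mul_zero, mul_one, zero_mul, sub_zero, zero_sub, add_zero, neg_zero]
    rfl
  rw [hre]
  have himsum : (∑ j : Fin n, ((fderiv ℝ (fun y => (R y : ℂ) * Complex.exp (I * (S y : ℂ))) x (Pi.single j 1))
      / ((R x : ℂ) * Complex.exp (I * (S x : ℂ)))).im ^ 2)
      = ∑ j : Fin n, (fderiv ℝ S x (Pi.single j 1))^2 :=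
    Finset.sum_congr rfl (fun j _ => by rw [him j])
  rw [himsum]
  field_simp
  ring
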